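/- Let F be an algebraically closed field of characteristic p > 0 and let f ∈ F[X] be a nonzero polynomial. If the derivative f' divides f² and f(0) = 0, then either f is a monomial (f = a·X^d for some a ∈ F and d ∈ ℕ) or deg f ≥ p. -/

import Mathlib

open Polynomial

/-- Over an algebraically closed field of characteristic `p > 0`, a nonzero polynomial `f`
with `f' ∣ f ^ 2` and `f 0 = 0` is either a monomial or has degree at least `p`. -/
theorem monomial_or_large_degree_of_derivative_dvd_sq {F : Type*} [Field F] [IsAlgClosed F]
    (p : ℕ) [CharP F p] (hp : 0 < p)
    (f : F[X]) (hf : f ≠ 0) (hdvd : f.derivative ∣ f ^ 2) (h0 : f.eval 0 = 0) :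
    (∃ (a : F) (d : ℕ), f = C a * X ^ d) ∨ p ≤ f.natDegree := by
  classical
  by_contra hcon
  push_neg at hcon
  obtain ⟨hmon, hdeg⟩ := hcon
  set n := f.natDegree with hn
  -- degree at least 1
  have hn1 : 1 ≤ n := by
    by_contra h
    push_neg at h
    have hn0 : n = 0 := by omega
    have : f = C (f.coeff 0) := Polynomial.eq_C_of_natDegree_eq_zero hn0
    rw [← coeff_zero_eq_eval_zero] at h0
    rw [h0, map_zero] at this
    exact hf this
  have hcast : ∀ m : ℕ, 1 ≤ m → m ≤ n → (m : F) ≠ 0 := by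
    intro m hm1 hmn h
    rw [CharP.cast_eq_zero_iff F p] at h
    have := Nat.le_of_dvd (by omega) h
    omega
  -- derivative is nonzero of degree n - 1
  have hsub : n - 1 + 1 = n := Nat.sub_add_cancel hn1
  have hcoeff : (derivative f).coeff (n - 1) = f.coeff n * n := by
    rw [coeff_derivative, hsub]
    congr 1
    rw [← Nat.cast_add_one, hsub]
  have hcne : (derivative f).coeff (n - 1) ≠ 0 := by
    rw [hcoeff]
    exact mul_ne_zero (by simpa [hn] using (leadingCoeff_ne_zero.mpr hf))
      (hcast n hn1 le_rfl)
  have hf' : derivative f ≠ 0 := fun h => hcne (by simp [h])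
  have hdeg' : (derivative f).natDegree = n - 1 :=
    le_antisymm (natDegree_derivative_le f) (le_natDegree_of_ne_zero hcne)
  -- root counting
  have hcardf : f.roots.card = n :=
    IsAlgClosed.card_roots_eq_natDegree
  have hcardf' : (derivative f).roots.card = n - 1 := by
    rw [IsAlgClosed.card_roots_eq_natDegree, hdeg']
  -- every root of f has multiplicity m with derivative multiplicity m - 1
  have hmul : ∀ a ∈ f.roots.toFinset,
      (derivative f).rootMultiplicity a = f.rootMultiplicity a - 1 := by
    intro a ha
    rw [Multiset.mem_toFinset, mem_roots hf] at ha
    apply derivative_rootMultiplicity_of_root_of_mem_nonZeroDivisors ha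
    rw [mem_nonZeroDivisors_iff_ne_zero]
    refine hcast _ ((rootMultiplicity_pos hf).mpr ha) ?_
    rw [← count_roots]
    exact (Multiset.count_le_card _ _).trans hcardf.le
  -- roots of f' are roots of f
  have hsubset : (derivative f).roots.toFinset ⊆ f.roots.toFinset := by
    intro a ha
    rw [Multiset.mem_toFinset, mem_roots hf'] at ha
    rw [Multiset.mem_toFinset, mem_roots hf]
    have : (f ^ 2).IsRoot a := ha.dvd hdvd
    rw [IsRoot, eval_pow, pow_eq_zero_iff (by norm_num)] at this
    exact this
  -- sums
  have hsumf : ∑ a ∈ f.roots.toFinset, f.rootMultiplicity a = n := by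
    rw [← hcardf, ← Multiset.toFinset_sum_count_eq]
    exact Finset.sum_congr rfl fun a _ => (count_roots f).symm
  have hsumf' : ∑ a ∈ f.roots.toFinset, (derivative f).rootMultiplicity a = n - 1 := by
    rw [← hcardf', ← Multiset.toFinset_sum_count_eq]
    rw [← Finset.sum_subset hsubset]
    · exact Finset.sum_congr rfl fun a _ => (count_roots (derivative f)).symm
    · intro a _ ha
      rw [Multiset.mem_toFinset] at ha
      rw [← count_roots]
      exact Multiset.count_eq_zero_of_notMem ha
  set r := f.roots.toFinset.card with hr
  have hkey : (n - 1) + r = n := by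
    rw [← hsumf', ← hsumf, Finset.sum_congr rfl hmul, hr,
      Finset.card_eq_sum_ones f.roots.toFinset, ← Finset.sum_add_distrib]
    refine Finset.sum_congr rfl fun a ha => Nat.sub_add_cancel ?_
    rw [Multiset.mem_toFinset, mem_roots hf] at ha
    exact (rootMultiplicity_pos hf).mpr ha
  have h0mem : (0 : F) ∈ f.roots.toFinset := by
    rw [Multiset.mem_toFinset, mem_roots hf]; exact h0
  have hr1 : r = 1 := by
    have : 1 ≤ r := Finset.card_pos.mpr ⟨0, h0mem⟩
    omega
  -- f.roots.toFinset = {0}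
  obtain ⟨a, hsing⟩ := Finset.card_eq_one.mp hr1
  have ha0 : a = 0 := by
    have := h0mem
    rw [hsing, Finset.mem_singleton] at this
    exact this.symm
  -- rootMultiplicity 0 f = n
  have hcount : f.roots.count 0 = n := by
    rw [← hcardf]
    rw [Multiset.count_eq_card]
    intro x hx
    have : x ∈ f.roots.toFinset := Multiset.mem_toFinset.mpr hx
    rw [hsing, ha0, Finset.mem_singleton] at this
    exact this.symm
  have hXdvd : X ^ n ∣ f := by
    have hd := pow_rootMultiplicity_dvd f 0
    rw [count_roots f] at hcount
    rwa [C_0, sub_zero, hcount] at hd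
  obtain ⟨g, hg⟩ := hXdvd
  have hgn : g.natDegree = 0 := by
    have hg0 : g ≠ 0 := fun h => hf (by rw [hg, h, mul_zero])
    have := natDegree_mul (pow_ne_zero n (X_ne_zero (R := F))) hg0
    rw [← hg, natDegree_X_pow] at this
    omega
  refine hmon (g.coeff 0) n ?_
  rw [hg, mul_comm]
  congr 1
  exact eq_C_of_natDegree_eq_zero hgn
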